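/- Let S be a maximal independent set, v a 2-tight vertex with solution neighbors x and y, and D = {x, y}. Then (S \ D) ∪ {v} is a maximal independent set if and only if v is adjacent to every vertex of F(D) \ {v}. -/

import Mathlib

open Finset

variable {V : Type*}

/-- `S` is an independent set in `G`: no two vertices of `S` are adjacent. -/
def Indep (G : SimpleGraph V) (S : Finset V) : Prop :=
  ∀ u ∈ S, ∀ v ∈ S, ¬ G.Adj u v

/-- `S` is a dominating set in `G`: every vertex outside `S` has a neighbor in `S`. -/
def Dominating (G : SimpleGraph V) (S : Finset V) : Prop :=
  ∀ v, v ∉ S → ∃ u ∈ S, G.Adj u v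

/-- `S` is a maximal independent set (w.r.t. set inclusion) in `G`. -/
def MaxIndep (G : SimpleGraph V) (S : Finset V) : Prop :=
  Indep G S ∧ ∀ T, Indep G T → S ⊆ T → T = S

/-- The tightness of a vertex `v` w.r.t. a solution `S`: the number of neighbors of `v` in `S`. -/
def tight [Fintype V] [DecidableEq V] (G : SimpleGraph V) [DecidableRel G.Adj]
    (S : Finset V) (v : V) : ℕ :=
  (G.neighborFinset v ∩ S).card

/-- `F(D)`: the non-solution vertices all of whose solution neighbors lie in `D`. -/
def FD [Fintype V] [DecidableEq V] (G : SimpleGraph V) [DecidableRel G.Adj]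
    (S D : Finset V) : Finset V :=
  Finset.univ.filter (fun v => v ∉ S ∧ G.neighborFinset v ∩ S ⊆ D)

/-- `A` is a maximal independent set of the subgraph of `G` induced on `W`. -/
def MaxIndepIn (G : SimpleGraph V) (W A : Finset V) : Prop :=
  A ⊆ W ∧ Indep G A ∧ ∀ T ⊆ W, Indep G T → A ⊆ T → T = A

/-- `S` is `k`-minimal: no `k`-swap yields a strictly smaller solution. -/
def KMinimal [Fintype V] [DecidableEq V] (G : SimpleGraph V) (S : Finset V) (k : ℕ) : Prop :=
  ¬ ∃ D A : Finset V, D ⊆ S ∧ D.card = k ∧ A ⊆ Finset.univ \ S ∧ A.Nonempty ∧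
      MaxIndep G ((S \ D) ∪ A) ∧ ((S \ D) ∪ A).card < S.card

lemma maxIndep_dominating [DecidableEq V] (G : SimpleGraph V) (S : Finset V)
    (h : MaxIndep G S) : Dominating G S := by
  intro u hu
  by_contra hc
  push_neg at hc
  have hind : Indep G (insert u S) := by
    intro a ha b hb
    simp only [Finset.mem_insert] at ha hb
    rcases ha with rfl | ha <;> rcases hb with rfl | hb
    · exact G.irrefl
    · exact fun h' => hc b hb (G.adj_symm h')
    · exact fun h' => hc a ha h'
    · exact h.1 a ha b hb
  have heq := h.2 _ hind (Finset.subset_insert _ _)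
  exact hu (heq ▸ Finset.mem_insert_self u S)

theorem stmt_9 [Fintype V] [DecidableEq V] (G : SimpleGraph V) [DecidableRel G.Adj]
    (S : Finset V) (x y v : V) (hS : MaxIndep G S) (hxy : x ≠ y)
    (hx : x ∈ S) (hy : y ∈ S) (hv : v ∉ S)
    (h2t : G.neighborFinset v ∩ S = {x, y}) :
    MaxIndep G ((S \ {x, y}) ∪ {v}) ↔
      ∀ u ∈ FD G S {x, y}, u ≠ v → G.Adj v u := by
  have hvS' : v ∈ (S \ {x, y}) ∪ {v} := by simp
  have hadjvx : G.Adj v x := by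
    have : x ∈ G.neighborFinset v ∩ S := by rw [h2t]; simp
    exact (SimpleGraph.mem_neighborFinset _ _ _).1 (Finset.mem_inter.1 this).1
  have hadjvy : G.Adj v y := by
    have : y ∈ G.neighborFinset v ∩ S := by rw [h2t]; simp
    exact (SimpleGraph.mem_neighborFinset _ _ _).1 (Finset.mem_inter.1 this).1
  constructor
  · intro hmax u hu hune
    simp only [FD, Finset.mem_filter] at hu
    obtain ⟨-, huS, huN⟩ := hu
    have huS' : u ∉ (S \ {x, y}) ∪ {v} := by
      simp only [Finset.mem_union, Finset.mem_sdiff, Finset.mem_singleton]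
      rintro (⟨h1, -⟩ | rfl)
      · exact huS h1
      · exact hune rfl
    obtain ⟨w, hw, hadj⟩ := maxIndep_dominating G _ hmax u huS'
    simp only [Finset.mem_union, Finset.mem_sdiff, Finset.mem_singleton] at hw
    rcases hw with ⟨hwS, hwD⟩ | rfl
    · exfalso
      have : w ∈ G.neighborFinset u ∩ S :=
        Finset.mem_inter.2 ⟨(SimpleGraph.mem_neighborFinset _ _ _).2 (G.adj_symm hadj), hwS⟩
      exact hwD (huN this)
    · exact hadj
  · intro hcond
    have hind : Indep G ((S \ {x, y}) ∪ {v}) := by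
      intro a ha b hb
      simp only [Finset.mem_union, Finset.mem_sdiff, Finset.mem_singleton] at ha hb
      rcases ha with ⟨haS, haD⟩ | ha <;> rcases hb with ⟨hbS, hbD⟩ | hb
      · exact hS.1 a haS b hbS
      · subst hb
        intro h'
        have : a ∈ G.neighborFinset b ∩ S :=
          Finset.mem_inter.2 ⟨(SimpleGraph.mem_neighborFinset _ _ _).2 (G.adj_symm h'), haS⟩
        rw [h2t] at this
        exact haD this
      · subst ha
        intro h'
        have : b ∈ G.neighborFinset a ∩ S :=
          Finset.mem_inter.2 ⟨(SimpleGraph.mem_neighborFinset _ _ _).2 h', hbS⟩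
        rw [h2t] at this
        exact hbD this
      · subst ha hb
        exact G.irrefl
    refine ⟨hind, fun T hT hsub => ?_⟩
    apply Finset.Subset.antisymm _ hsub
    intro t ht
    by_contra htS'
    simp only [Finset.mem_union, Finset.mem_sdiff, Finset.mem_singleton, not_or, not_and,
      not_not] at htS'
    obtain ⟨h1, h2⟩ := htS'
    by_cases htS : t ∈ S
    · rcases Finset.mem_insert.1 (h1 htS) with rfl | h3
      · exact hT v (hsub hvS') t ht hadjvx
      · rw [Finset.mem_singleton] at h3
        subst h3
        exact hT v (hsub hvS') t ht hadjvy
    · have htF : t ∈ FD G S {x, y} := by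
        simp only [FD, Finset.mem_filter, Finset.mem_univ, true_and]
        refine ⟨htS, fun w hw => ?_⟩
        rw [Finset.mem_inter, SimpleGraph.mem_neighborFinset] at hw
        by_contra hwD
        have hwS' : w ∈ (S \ {x, y}) ∪ {v} := by
          simp only [Finset.mem_union, Finset.mem_sdiff, Finset.mem_singleton]
          exact Or.inl ⟨hw.2, fun h => hwD (by simpa using h)⟩
        exact hT t ht w (hsub hwS') hw.1
      exact hT v (hsub hvS') t ht (hcond t htF h2)
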